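/- For $\mathrm{Re}(b)>\mathrm{Re}(a)>0$, the expansion ${}_{1}F_{2}(a;b,c;z) = \sum_{k=0}^{\infty} \frac{(-1)^k (b-a)_k}{(b)_k (c)_k\, k!}\, z^k\, {}_{0}F_{1}(-;c+k;z)$ holds for all complex $z$. -/

import Mathlib

open Complex MeasureTheory intervalIntegral Finset

noncomputable def poch (a : ℂ) (k : ℕ) : ℂ := ∏ i ∈ Finset.range k, (a + i)

noncomputable def F01 (c z : ℂ) : ℂ :=
  ∑' k : ℕ, 1 / (poch c k * (Nat.factorial k : ℂ)) * z ^ k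

noncomputable def F02 (b c z : ℂ) : ℂ :=
  ∑' k : ℕ, 1 / (poch b k * poch c k * (Nat.factorial k : ℂ)) * z ^ k

noncomputable def F12 (a b c z : ℂ) : ℂ :=
  ∑' k : ℕ, poch a k / (poch b k * poch c k * (Nat.factorial k : ℂ)) * z ^ k

noncomputable def F22 (a b c d z : ℂ) : ℂ :=
  ∑' k : ℕ, poch a k * poch b k / (poch c k * poch d k * (Nat.factorial k : ℂ)) * z ^ k

noncomputable def F32 (a b c d e z : ℂ) : ℂ :=
  ∑' k : ℕ, poch a k * poch b k * poch c k / (poch d k * poch e k * (Nat.factorial k : ℂ)) * z ^ k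

noncomputable def F23 (a b c d e z : ℂ) : ℂ :=
  ∑' k : ℕ, poch a k * poch b k / (poch c k * poch d k * poch e k * (Nat.factorial k : ℂ)) * z ^ k

noncomputable def Bate (n : ℕ) (α β z : ℂ) : ℂ :=
  ∑ k ∈ Finset.range (n+1),
    (-1 : ℂ) ^ k * (Nat.factorial n : ℂ) /
      ((Nat.factorial k : ℂ) * (Nat.factorial (n - k) : ℂ) * poch (α+1) k * poch (β+1) k) * z ^ k

lemma poch_zero' (a : ℂ) : poch a 0 = 1 := by simp [poch]

lemma poch_succ (a : ℂ) (k : ℕ) : poch a (k+1) = poch a k * (a + k) := by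
  simp [poch, Finset.prod_range_succ]

lemma poch_succ' (a : ℂ) (k : ℕ) : poch a (k+1) = a * poch (a+1) k := by
  induction k with
  | zero => simp [poch]
  | succ k ih =>
      rw [poch_succ, ih, poch_succ]
      push_cast; ring

lemma poch_add (a : ℂ) (m n : ℕ) : poch a (m+n) = poch a m * poch (a+m) n := by
  induction n with
  | zero => simp [poch]
  | succ n ih => rw [← Nat.add_assoc, poch_succ, ih, poch_succ]; push_cast; ring

lemma vandermonde_poch (n : ℕ) : ∀ x b : ℂ,
    ∑ k ∈ Finset.range (n+1),
      (-1:ℂ)^k * (n.choose k : ℂ) * poch x k * poch (b+k) (n-k) = poch (b-x) n := by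
  induction n with
  | zero => intro x b; simp [poch]
  | succ n ih =>
      intro x b
      rw [Finset.sum_range_succ' _ (n+1)]
      have key : ∀ k ∈ Finset.range (n+1),
          (-1:ℂ)^(k+1) * ((n+1).choose (k+1) : ℂ) * poch x (k+1) * poch (b+(k+1:ℕ)) ((n+1)-(k+1))
          = ((-1:ℂ)^(k+1) * (n.choose (k+1) : ℂ) * poch x (k+1) * poch (b+(k+1:ℕ)) ((n+1)-(k+1)))
            + (-(x * ((-1:ℂ)^k * (n.choose k : ℂ) * poch (x+1) k * poch ((b+1)+k) (n-k)))) := by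
        intro k hk
        rw [Nat.choose_succ_succ]
        have h1 : poch x (k+1) = x * poch (x+1) k := poch_succ' x k
        have h2 : (b+((k+1:ℕ):ℂ)) = (b+1) + (k:ℕ) := by push_cast; ring
        have h3 : (n+1)-(k+1) = n - k := by omega
        rw [h3, h2, h1]
        push_cast
        ring
      rw [Finset.sum_congr rfl key, Finset.sum_add_distrib]
      have hB : ∑ k ∈ Finset.range (n+1),
          (-(x * ((-1:ℂ)^k * (n.choose k : ℂ) * poch (x+1) k * poch ((b+1)+k) (n-k))))
          = -(x * poch (b-x) n) := by
        have e : (b+1) - (x+1) = b - x := by ring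
        rw [Finset.sum_neg_distrib, ← Finset.mul_sum, ih (x+1) (b+1), e]
      rw [hB]
      have hA : (∑ k ∈ Finset.range (n+1),
          (-1:ℂ)^(k+1) * (n.choose (k+1) : ℂ) * poch x (k+1) * poch (b+((k+1:ℕ):ℂ)) ((n+1)-(k+1)))
          + (-1:ℂ)^0 * ((n+1).choose 0 : ℂ) * poch x 0 * poch (b+(0:ℕ)) ((n+1)-0)
          = (b+n) * poch (b-x) n := by
        have e0 : (-1:ℂ)^0 * ((n+1).choose 0 : ℂ) * poch x 0 * poch (b+((0:ℕ):ℂ)) ((n+1)-0)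
            = (-1:ℂ)^0 * ((n.choose 0 : ℕ) : ℂ) * poch x 0 * poch (b+((0:ℕ):ℂ)) ((n+1)-0) := by
          simp
        rw [e0, ← Finset.sum_range_succ' (fun k => (-1:ℂ)^k * (n.choose k : ℂ) * poch x k * poch (b+(k:ℕ)) ((n+1)-k)) (n+1),
            Finset.sum_range_succ]
        simp only [Nat.choose_succ_self, Nat.cast_zero, zero_mul, mul_zero, add_zero]
        have key2 : ∀ k ∈ Finset.range (n+1),
            (-1:ℂ)^k * (n.choose k : ℂ) * poch x k * poch (b+(k:ℕ)) ((n+1)-k)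
            = ((-1:ℂ)^k * (n.choose k : ℂ) * poch x k * poch (b+(k:ℕ)) (n-k)) * (b+n) := by
          intro k hk
          have hk' : k ≤ n := by simpa [Nat.lt_succ_iff] using hk
          have h4 : (n+1)-k = (n-k)+1 := by omega
          rw [h4, poch_succ]
          have h5 : (b + (k:ℕ)) + ((n-k : ℕ):ℂ) = b + n := by
            have : ((n-k:ℕ):ℂ) = (n:ℂ) - k := by
              push_cast [Nat.cast_sub hk']; ring
            rw [this]; ring
          rw [h5]; ring
        rw [Finset.sum_congr rfl key2, ← Finset.sum_mul, ih x b]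
        ring
      rw [poch_succ]
      push_cast at hA ⊢
      linear_combination hA

lemma poch_ne_zero {a : ℂ} {k : ℕ} (h : ∀ i : ℕ, i < k → a + i ≠ 0) : poch a k ≠ 0 := by
  rw [poch, Finset.prod_ne_zero_iff]
  intro i hi
  exact h i (Finset.mem_range.mp hi)

lemma poch_ne_zero_of_re_pos {b : ℂ} (hb : 0 < b.re) (k : ℕ) : poch b k ≠ 0 :=
  poch_ne_zero (fun i _ => by
    intro h
    have h2 : 0 < (b + (i:ℂ)).re := by
      simp only [add_re, natCast_re]
      have : (0:ℝ) ≤ (i:ℝ) := by positivity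
      linarith
    rw [h] at h2; simp at h2)

lemma norm_poch (a : ℂ) (k : ℕ) : ‖poch a k‖ = ∏ i ∈ Finset.range k, ‖a + (i:ℂ)‖ := by
  simp [poch, norm_prod]

lemma norm_le_norm_add (b : ℂ) (hb : 0 < b.re) (i : ℕ) : b.re ≤ ‖b + i‖ := by
  calc b.re ≤ (b + i).re := by
        simp only [add_re, natCast_re]
        have : (0:ℝ) ≤ (i:ℝ) := by positivity
        linarith
  _ ≤ ‖b + i‖ := by exact re_le_norm _

lemma norm_poch_sub_le (a b : ℂ) (hb : 0 < b.re) (k : ℕ) :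
    ‖poch (b-a) k‖ ≤ (1 + ‖a‖ / b.re)^k * ‖poch b k‖ := by
  induction k with
  | zero => simp [poch]
  | succ k ih =>
      rw [norm_poch, Finset.prod_range_succ, ← norm_poch,
          norm_poch b, Finset.prod_range_succ, ← norm_poch b]
      have h1 : ‖b - a + k‖ ≤ (1 + ‖a‖ / b.re) * ‖b + k‖ := by
        have h2 : ‖b - a + k‖ ≤ ‖b + k‖ + ‖a‖ := by
          calc ‖b - a + k‖ = ‖(b + k) - a‖ := by ring_nf
          _ ≤ ‖b + k‖ + ‖a‖ := norm_sub_le _ _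
        have h3 : ‖a‖ ≤ (‖a‖ / b.re) * ‖b + k‖ := by
          rw [div_mul_eq_mul_div, le_div_iff₀ hb]
          have := norm_le_norm_add b hb k
          nlinarith [norm_nonneg a]
        nlinarith
      calc ‖poch (b-a) k‖ * ‖b - a + k‖
          ≤ ((1 + ‖a‖/b.re)^k * ‖poch b k‖) * ((1 + ‖a‖/b.re) * ‖b + k‖) := by
            apply mul_le_mul ih h1 (norm_nonneg _) (by positivity)
      _ = (1 + ‖a‖/b.re)^(k+1) * (‖poch b k‖ * ‖b + k‖) := by ring

lemma exists_eps {c : ℂ} (hc : ∀ n : ℕ, c ≠ -n) :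
    ∃ ε : ℝ, 0 < ε ∧ ε ≤ 1 ∧ ∀ i : ℕ, ε ≤ ‖c + i‖ := by
  set N := ⌈‖c‖⌉₊ with hN
  set s : Finset ℝ := insert (1:ℝ) ((Finset.range (N+1)).image (fun i : ℕ => ‖c + (i:ℂ)‖)) with hs
  have hne : s.Nonempty := ⟨1, by simp [hs]⟩
  refine ⟨s.min' hne, ?_, ?_, ?_⟩
  · rw [Finset.lt_min'_iff]
    intro y hy
    rw [hs] at hy
    rcases Finset.mem_insert.mp hy with h | h
    · simp [h]
    · obtain ⟨i, _, rfl⟩ := Finset.mem_image.mp h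
      have : c + i ≠ 0 := by
        intro h0
        exact hc i (by linear_combination h0)
      exact norm_pos_iff.mpr this
  · exact Finset.min'_le _ _ (by simp [hs])
  · intro i
    by_cases hi : i ≤ N
    · exact Finset.min'_le _ _ (by
        rw [hs]
        exact Finset.mem_insert_of_mem (Finset.mem_image.mpr ⟨i, Finset.mem_range.mpr (by omega), rfl⟩))
    · have h1 : s.min' hne ≤ 1 := Finset.min'_le _ _ (by simp [hs])
      have h2 : (1:ℝ) ≤ ‖c + i‖ := by
        have key : ‖(i:ℂ)‖ - ‖c‖ ≤ ‖c + i‖ := by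
          have h4 : (i:ℂ) - (-c) = c + i := by ring
          have h5 := norm_sub_norm_le ((i:ℂ)) (-c)
          rw [h4, norm_neg] at h5
          exact h5
        have hni : ‖(i:ℂ)‖ = (i:ℝ) := by simp
        have hcc : ‖c‖ ≤ (N:ℝ) := Nat.le_ceil _
        have hi2 : (N:ℝ) + 1 ≤ (i:ℝ) := by exact_mod_cast (by omega : N+1 ≤ i)
        linarith
      linarith

lemma eps_le_norm_poch {c : ℂ} {ε : ℝ} (hε : 0 ≤ ε) (h : ∀ i : ℕ, ε ≤ ‖c + i‖) (n : ℕ) :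
    ε ^ n ≤ ‖poch c n‖ := by
  rw [norm_poch]
  calc ε ^ n = ∏ _i ∈ Finset.range n, ε := by rw [Finset.prod_const, Finset.card_range]
  _ ≤ ∏ i ∈ Finset.range n, ‖c + (i:ℂ)‖ :=
      Finset.prod_le_prod (fun _ _ => hε) (fun i _ => h i)

lemma tsum_prod_antidiagonal {T : ℕ × ℕ → ℂ} (hT_sum : Summable T) :
    (∑' p : ℕ × ℕ, T p) = ∑' n : ℕ, ∑ p ∈ Finset.HasAntidiagonal.antidiagonal n, T p := by
  have hs : Summable (fun x : (Σ n : ℕ, Finset.HasAntidiagonal.antidiagonal n) =>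
      T (Finset.HasAntidiagonal.sigmaAntidiagonalEquivProd x)) :=
    (Finset.HasAntidiagonal.sigmaAntidiagonalEquivProd).summable_iff.mpr hT_sum
  calc ∑' p : ℕ × ℕ, T p
      = ∑' x : (Σ n : ℕ, Finset.HasAntidiagonal.antidiagonal n), T (Finset.HasAntidiagonal.sigmaAntidiagonalEquivProd x) :=
        ((Finset.HasAntidiagonal.sigmaAntidiagonalEquivProd).tsum_eq T).symm
    _ = ∑' (n : ℕ) (p : Finset.HasAntidiagonal.antidiagonal n), T (Finset.HasAntidiagonal.sigmaAntidiagonalEquivProd ⟨n, p⟩) :=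
        Summable.tsum_sigma' (fun n => Summable.of_finite) hs
    _ = ∑' n : ℕ, ∑ p ∈ Finset.HasAntidiagonal.antidiagonal n, T p := by
        refine tsum_congr fun n => ?_
        rw [← Finset.tsum_subtype (Finset.HasAntidiagonal.antidiagonal n) T]
        exact tsum_congr fun p => by simp [Finset.HasAntidiagonal.sigmaAntidiagonalEquivProd]

theorem oneF2_expansion_zeroF1 (a b c z : ℂ)
    (ha : 0 < a.re) (hab : a.re < b.re) (hc : ∀ n : ℕ, c ≠ -n) :
    F12 a b c z =
      ∑' k : ℕ, (-1 : ℂ) ^ k * poch (b - a) k /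
          (poch b k * poch c k * (Nat.factorial k : ℂ)) * z ^ k *
          F01 (c + k) z := by
  have hb : 0 < b.re := lt_trans ha hab
  obtain ⟨ε, hε, hε1, hεc⟩ := exists_eps hc
  set T : ℕ × ℕ → ℂ := fun p =>
    (-1 : ℂ) ^ p.1 * poch (b - a) p.1 /
      (poch b p.1 * poch c p.1 * (Nat.factorial p.1 : ℂ)) * z ^ p.1 *
      (1 / (poch (c + p.1) p.2 * (Nat.factorial p.2 : ℂ)) * z ^ p.2) with hT
  -- basic nonvanishing
  have hc0 : ∀ m : ℕ, c + (m:ℂ) ≠ 0 := fun m h => hc m (by linear_combination h)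
  have hcpoch : ∀ k j : ℕ, poch (c + k) j ≠ 0 := by
    intro k j
    apply poch_ne_zero
    intro i _
    have h := hc0 (k + i)
    intro h2
    apply h
    push_cast
    linear_combination h2
  have hcpoch0 : ∀ k : ℕ, poch c k ≠ 0 := by
    intro k
    apply poch_ne_zero
    intro i _
    exact hc0 i
  have hεck : ∀ k i : ℕ, ε ≤ ‖(c + (k:ℂ)) + (i:ℂ)‖ := by
    intro k i
    have := hεc (k + i)
    have e : c + ((k + i : ℕ) : ℂ) = (c + k) + i := by push_cast; ring
    rwa [e] at this
  -- summability
  set R : ℝ := 1 + ‖a‖ / b.re with hR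
  have hR1 : (1:ℝ) ≤ R := by
    rw [hR]
    have : 0 ≤ ‖a‖ / b.re := by positivity
    linarith
  set u : ℕ → ℝ := fun k => (R * ‖z‖ / ε) ^ k / (Nat.factorial k : ℝ) with hu
  set v : ℕ → ℝ := fun j => (‖z‖ / ε) ^ j / (Nat.factorial j : ℝ) with hv
  have hu_sum : Summable u := Real.summable_pow_div_factorial _
  have hv_sum : Summable v := Real.summable_pow_div_factorial _
  have huv : Summable (fun p : ℕ × ℕ => u p.1 * v p.2) :=
    hu_sum.mul_of_nonneg hv_sum (fun k => by positivity) (fun j => by positivity)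
  have hbound : ∀ p : ℕ × ℕ, ‖T p‖ ≤ u p.1 * v p.2 := by
    rintro ⟨k, j⟩
    have hpbk : (0:ℝ) < ‖poch b k‖ := norm_pos_iff.mpr (poch_ne_zero_of_re_pos hb k)
    have hεk : ε ^ k ≤ ‖poch c k‖ := eps_le_norm_poch hε.le hεc k
    have hεj : ε ^ j ≤ ‖poch (c + k) j‖ := eps_le_norm_poch hε.le (hεck k) j
    have hba : ‖poch (b - a) k‖ ≤ R ^ k * ‖poch b k‖ := norm_poch_sub_le a b hb k
    have hfk : (0:ℝ) < (Nat.factorial k : ℝ) := by positivity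
    have hfj : (0:ℝ) < (Nat.factorial j : ℝ) := by positivity
    have e1 : ‖T (k, j)‖ =
        ‖poch (b - a) k‖ / (‖poch b k‖ * ‖poch c k‖ * (Nat.factorial k : ℝ)) * ‖z‖ ^ k *
          (1 / (‖poch (c + k) j‖ * (Nat.factorial j : ℝ)) * ‖z‖ ^ j) := by
      simp [hT, norm_div, norm_mul, norm_pow, Complex.norm_natCast]
    rw [e1]
    have step : ‖poch (b - a) k‖ / (‖poch b k‖ * ‖poch c k‖ * (Nat.factorial k : ℝ)) * ‖z‖ ^ k *
          (1 / (‖poch (c + k) j‖ * (Nat.factorial j : ℝ)) * ‖z‖ ^ j)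
        ≤ (R ^ k * ‖poch b k‖) / (‖poch b k‖ * ε ^ k * (Nat.factorial k : ℝ)) * ‖z‖ ^ k *
          (1 / (ε ^ j * (Nat.factorial j : ℝ)) * ‖z‖ ^ j) := by
      gcongr <;> first
        | exact norm_pos_iff.mpr (hcpoch k j)
        | positivity
    refine step.trans (le_of_eq ?_)
    have hbk' : ‖poch b k‖ ≠ 0 := ne_of_gt hpbk
    simp only [hu, hv, div_pow, mul_pow]
    have key : R ^ k * ‖poch b k‖ / (‖poch b k‖ * ε ^ k * (Nat.factorial k : ℝ)) * ‖z‖ ^ k *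
          (1 / (ε ^ j * (Nat.factorial j : ℝ)) * ‖z‖ ^ j)
        = (‖poch b k‖ / ‖poch b k‖) * (R ^ k * ‖z‖ ^ k / ε ^ k / (Nat.factorial k : ℝ) *
            (‖z‖ ^ j / ε ^ j / (Nat.factorial j : ℝ))) := by
      ring
    rw [key, div_self hbk', one_mul]
  have hT_sum : Summable T :=
    Summable.of_norm (huv.of_nonneg_of_le (fun p => norm_nonneg _) hbound)
  -- RHS = double sum
  have hrhs : (∑' k : ℕ, (-1 : ℂ) ^ k * poch (b - a) k /
          (poch b k * poch c k * (Nat.factorial k : ℂ)) * z ^ k *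
          F01 (c + k) z) = ∑' p : ℕ × ℕ, T p := by
    rw [Summable.tsum_prod' hT_sum hT_sum.prod_factor]
    congr 1
    ext k
    rw [F01, ← tsum_mul_left]
  rw [hrhs]
  -- regroup along antidiagonals
  rw [tsum_prod_antidiagonal hT_sum]
  rw [F12]
  congr 1
  ext n
  rw [Finset.Nat.sum_antidiagonal_eq_sum_range_succ_mk]
  have hterm : ∀ k ∈ Finset.range (n+1), T (k, n - k)
      = ((-1:ℂ)^k * (n.choose k : ℂ) * poch (b - a) k * poch (b + k) (n - k)) *
          (z ^ n / (poch b n * poch c n * (Nat.factorial n : ℂ))) := by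
    intro k hk
    have hk' : k ≤ n := by simpa [Nat.lt_succ_iff] using hk
    have ekn : k + (n - k) = n := by omega
    have hbn : poch b n = poch b k * poch (b + k) (n - k) := by
      conv_lhs => rw [← ekn]
      exact poch_add b k (n - k)
    have hcn : poch c n = poch c k * poch (c + k) (n - k) := by
      conv_lhs => rw [← ekn]
      exact poch_add c k (n - k)
    have hzn : z ^ n = z ^ k * z ^ (n - k) := by
      rw [← pow_add, ekn]
    have hfac : ((Nat.factorial n : ℕ) : ℂ) = (n.choose k : ℂ) * (Nat.factorial k : ℂ) * (Nat.factorial (n - k) : ℂ) := by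
      exact_mod_cast congrArg (Nat.cast (R := ℂ)) (Nat.choose_mul_factorial_mul_factorial hk').symm
    have h1 : poch b k ≠ 0 := poch_ne_zero_of_re_pos hb k
    have h2 : poch (b + k) (n - k) ≠ 0 := by
      apply poch_ne_zero_of_re_pos
      simp only [add_re, natCast_re]
      have : (0:ℝ) ≤ (k:ℝ) := by positivity
      linarith
    have h3 : poch c k ≠ 0 := hcpoch0 k
    have h4 : poch (c + k) (n - k) ≠ 0 := hcpoch k (n - k)
    have h5 : ((Nat.factorial k : ℕ) : ℂ) ≠ 0 := by exact_mod_cast (Nat.factorial_ne_zero k)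
    have h6 : ((Nat.factorial (n - k) : ℕ) : ℂ) ≠ 0 := by exact_mod_cast (Nat.factorial_ne_zero (n - k))
    have h7 : ((n.choose k : ℕ) : ℂ) ≠ 0 := by
      have := Nat.choose_pos hk'
      exact_mod_cast Nat.pos_iff_ne_zero.mp this
    rw [hT]
    simp only
    rw [hbn, hcn, hzn, hfac]
    field_simp
  rw [Finset.sum_congr rfl hterm, ← Finset.sum_mul]
  have := vandermonde_poch n (b - a) b
  have hsum : ∑ k ∈ Finset.range (n+1),
      (-1:ℂ)^k * (n.choose k : ℂ) * poch (b - a) k * poch (b + k) (n - k) = poch a n := by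
    rw [this]
    congr 1
    ring
  rw [hsum]
  ring
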